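/- For every λ > 0, the unique solution (X_λ, Y_λ) of the system λX_λ + B₁(X_λ,Y_λ) = 0, λY_λ + B₂(X_λ,Y_λ) = 0 satisfies 0 ≤ X_λ ≤ √2 and −√2 ≤ Y_λ ≤ 0; in particular, the set {(X_λ,Y_λ) : λ > 0} is bounded in ℝ². -/

import Mathlib

open Real Filter Topology

/-- The 2×2 matrix C(α,β) from the paper. -/
noncomputable def Cmat (a b : ℝ) : Matrix (Fin 2) (Fin 2) ℝ :=
  1 + b • !![-a, -1 + a; -1 + a, -a] + (1 - b) • !![-1 + a, -a; -a, -1 + a]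

/-- The running costs L₁, L₂. -/
noncomputable def Lfun (i : Fin 2) (a b : ℝ) : ℝ :=
  if i = 0 then a * b + 2 * (1 - a) * (1 - b) else -(a * b) - 2 * (1 - a) * (1 - b)

/-- b_i(α,β,u₁,u₂) = c_{i1}(α,β)u₁ + c_{i2}(α,β)u₂ − L_i(α,β). -/
noncomputable def bfun (i : Fin 2) (a b u₁ u₂ : ℝ) : ℝ :=
  Cmat a b i 0 * u₁ + Cmat a b i 1 * u₂ - Lfun i a b

/-- A_i(u₁,u₂) = max_{α∈𝒜} min_{β∈ℬ} b_i(α,β,u₁,u₂). -/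
noncomputable def Afun (As Bs : Set ℝ) (i : Fin 2) (u₁ u₂ : ℝ) : ℝ :=
  sSup ((fun a => sInf ((fun b => bfun i a b u₁ u₂) '' Bs)) '' As)

/-- The set 𝒜 = {2 − √2 + 4^{−k} : k ≥ 1} ∪ {2 − √2}. -/
noncomputable def calA : Set ℝ :=
  {x | ∃ k : ℕ, 1 ≤ k ∧ x = 2 - Real.sqrt 2 + (4 : ℝ) ^ (-(k : ℤ))} ∪ {2 - Real.sqrt 2}

/-- The set ℬ = {0, 1}. -/
def calB : Set ℝ := {0, 1}

/-- B_i(u₁,u₂) = max_{α∈𝒜} min_{β∈ℬ} b_i(α,β,u₁,u₂). -/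
noncomputable def Bop (i : Fin 2) (u₁ u₂ : ℝ) : ℝ := Afun calA calB i u₁ u₂

lemma bfun00 (a u1 u2 : ℝ) : bfun 0 a 0 u1 u2 = a*(u1-u2) - 2*(1-a) := by
  simp [bfun, Cmat, Lfun, Matrix.add_apply, Matrix.smul_apply, Matrix.one_apply]; ring
lemma bfun01 (a u1 u2 : ℝ) : bfun 0 a 1 u1 u2 = (1-a)*(u1-u2) - a := by
  simp [bfun, Cmat, Lfun, Matrix.add_apply, Matrix.smul_apply, Matrix.one_apply]; ring
lemma bfun10 (a u1 u2 : ℝ) : bfun 1 a 0 u1 u2 = -(a*(u1-u2)) + 2*(1-a) := by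
  simp [bfun, Cmat, Lfun, Matrix.add_apply, Matrix.smul_apply, Matrix.one_apply]; ring
lemma bfun11 (a u1 u2 : ℝ) : bfun 1 a 1 u1 u2 = -((1-a)*(u1-u2)) + a := by
  simp [bfun, Cmat, Lfun, Matrix.add_apply, Matrix.smul_apply, Matrix.one_apply]; ring

lemma sqrt2_sq : Real.sqrt 2 * Real.sqrt 2 = 2 := Real.mul_self_sqrt (by norm_num)
lemma sqrt2_gt : (5:ℝ)/4 < Real.sqrt 2 := by
  nlinarith [sqrt2_sq, Real.sqrt_nonneg 2]
lemma sqrt2_lt : Real.sqrt 2 < (3:ℝ)/2 := by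
  nlinarith [sqrt2_sq, Real.sqrt_nonneg 2]

lemma a0_mem : (2 - Real.sqrt 2) ∈ calA := Or.inr rfl

lemma calA_bounds {a : ℝ} (h : a ∈ calA) : 2 - Real.sqrt 2 ≤ a ∧ a ≤ 1 := by
  rcases h with ⟨k, hk, rfl⟩ | h
  · have h1 : (0:ℝ) < (4:ℝ) ^ (-(k:ℤ)) := by positivity
    have h2 : (4:ℝ) ^ (-(k:ℤ)) ≤ (4:ℝ) ^ (-(1:ℤ)) := by
      apply zpow_le_zpow_right₀ (by norm_num)
      omega
    have h3 : (4:ℝ) ^ (-(1:ℤ)) = 1/4 := by norm_num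
    constructor
    · linarith
    · have := sqrt2_gt; rw [h3] at h2; linarith
  · simp only [Set.mem_singleton_iff] at h
    subst h
    have h1 := sqrt2_gt
    have h2 := sqrt2_lt
    constructor <;> linarith

lemma Bop_eq (i : Fin 2) (u1 u2 : ℝ) :
    Bop i u1 u2 = sSup ((fun a => min (bfun i a 0 u1 u2) (bfun i a 1 u1 u2)) '' calA) := by
  unfold Bop Afun
  congr 1
  apply Set.image_congr
  intro a _
  rw [show calB = ({0,1} : Set ℝ) from rfl, Set.image_pair, csInf_pair]

lemma bddAbove_B (i : Fin 2) (u1 u2 : ℝ) :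
    BddAbove ((fun a => min (bfun i a 0 u1 u2) (bfun i a 1 u1 u2)) '' calA) := by
  refine ⟨|u1 - u2| + 2, ?_⟩
  rintro _ ⟨a, ha, rfl⟩
  obtain ⟨ha1, ha2⟩ := calA_bounds ha
  have hs := sqrt2_lt
  have hd1 := abs_nonneg (u1 - u2)
  have hd2 := le_abs_self (u1 - u2)
  have hd3 := neg_abs_le (u1 - u2)
  fin_cases i
  · show min (bfun 0 a 0 u1 u2) (bfun 0 a 1 u1 u2) ≤ |u1 - u2| + 2
    refine le_trans (min_le_right _ _) ?_
    rw [bfun01]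
    nlinarith
  · show min (bfun 1 a 0 u1 u2) (bfun 1 a 1 u1 u2) ≤ |u1 - u2| + 2
    refine le_trans (min_le_left _ _) ?_
    rw [bfun10]
    nlinarith

-- lower bounds via a₀
lemma Bop0_ge (u1 u2 : ℝ) :
    min ((2-Real.sqrt 2)*((u1-u2)-Real.sqrt 2)) ((Real.sqrt 2 - 1)*((u1-u2)-Real.sqrt 2))
      ≤ Bop 0 u1 u2 := by
  rw [Bop_eq]
  refine le_csSup_of_le (bddAbove_B 0 u1 u2) (Set.mem_image_of_mem _ a0_mem) ?_
  rw [bfun00, bfun01]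
  apply min_le_min
  · nlinarith [sqrt2_sq]
  · nlinarith [sqrt2_sq]

lemma Bop1_ge (u1 u2 : ℝ) :
    min (-((2-Real.sqrt 2)*((u1-u2)-Real.sqrt 2))) (-((Real.sqrt 2 - 1)*((u1-u2)-Real.sqrt 2)))
      ≤ Bop 1 u1 u2 := by
  rw [Bop_eq]
  refine le_csSup_of_le (bddAbove_B 1 u1 u2) (Set.mem_image_of_mem _ a0_mem) ?_
  rw [bfun10, bfun11]
  apply min_le_min
  · nlinarith [sqrt2_sq]
  · nlinarith [sqrt2_sq]

lemma Bop0_le {u1 u2 : ℝ} (h : u1 - u2 ≤ Real.sqrt 2) : Bop 0 u1 u2 ≤ 0 := by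
  rw [Bop_eq]
  apply csSup_le ⟨_, Set.mem_image_of_mem _ a0_mem⟩
  rintro _ ⟨a, ha, rfl⟩
  obtain ⟨ha1, ha2⟩ := calA_bounds ha
  refine le_trans (min_le_right _ _) ?_
  rw [bfun01]
  nlinarith [sqrt2_sq, Real.sqrt_nonneg 2]

lemma Bop1_le {u1 u2 : ℝ} (h : Real.sqrt 2 < u1 - u2) :
    Bop 1 u1 u2 ≤ -((2-Real.sqrt 2)*((u1-u2)-Real.sqrt 2)) := by
  rw [Bop_eq]
  apply csSup_le ⟨_, Set.mem_image_of_mem _ a0_mem⟩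
  rintro _ ⟨a, ha, rfl⟩
  obtain ⟨ha1, ha2⟩ := calA_bounds ha
  refine le_trans (min_le_left _ _) ?_
  rw [bfun10]
  nlinarith [sqrt2_sq, Real.sqrt_nonneg 2]

theorem solution_bounds (X Y : ℝ → ℝ)
    (hsol : ∀ lam : ℝ, 0 < lam →
      lam * X lam + Bop 0 (X lam) (Y lam) = 0 ∧
      lam * Y lam + Bop 1 (X lam) (Y lam) = 0) :
    (∀ lam : ℝ, 0 < lam →
      0 ≤ X lam ∧ X lam ≤ Real.sqrt 2 ∧ -Real.sqrt 2 ≤ Y lam ∧ Y lam ≤ 0) ∧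
    Bornology.IsBounded {p : ℝ × ℝ | ∃ lam : ℝ, 0 < lam ∧ p = (X lam, Y lam)} := by
  have key : ∀ lam : ℝ, 0 < lam →
      0 ≤ X lam ∧ X lam ≤ Real.sqrt 2 ∧ -Real.sqrt 2 ≤ Y lam ∧ Y lam ≤ 0 := by
    intro lam hlam
    obtain ⟨e1, e2⟩ := hsol lam hlam
    set x := X lam with hx
    set y := Y lam with hy
    have hs0 := Real.sqrt_nonneg 2
    have hs1 := sqrt2_gt
    have hd : x - y ≤ Real.sqrt 2 := by
      by_contra hcon
      push_neg at hcon
      -- Bop 0 x y > 0, so x < 0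
      have hB0 : (Real.sqrt 2 - 1)*((x-y)-Real.sqrt 2) ≤ Bop 0 x y := by
        refine le_trans ?_ (Bop0_ge x y)
        apply le_min <;> nlinarith [sqrt2_lt, sqrt2_sq]
      have hxneg : x < 0 := by nlinarith
      have hB1 : Bop 1 x y ≤ -((2-Real.sqrt 2)*((x-y)-Real.sqrt 2)) := Bop1_le hcon
      have hypos : 0 < y := by nlinarith [sqrt2_lt]
      nlinarith
    have hB0le : Bop 0 x y ≤ 0 := Bop0_le hd
    have hxge : 0 ≤ x := by nlinarith
    have hB1ge : (0:ℝ) ≤ Bop 1 x y := by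
      refine le_trans ?_ (Bop1_ge x y)
      apply le_min <;> nlinarith [sqrt2_lt]
    have hyle : y ≤ 0 := by nlinarith
    refine ⟨hxge, by linarith, by linarith, hyle⟩
  refine ⟨key, ?_⟩
  apply Bornology.IsBounded.subset
    ((Metric.isBounded_Icc (0:ℝ) (Real.sqrt 2)).prod (Metric.isBounded_Icc (-Real.sqrt 2) (0:ℝ)))
  rintro ⟨p1, p2⟩ ⟨lam, hlam, hp⟩
  obtain ⟨h1, h2, h3, h4⟩ := key lam hlam
  simp only [Prod.mk.injEq] at hp
  obtain ⟨rfl, rfl⟩ := hp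
  exact ⟨⟨h1, h2⟩, ⟨h3, h4⟩⟩
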